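/- There exist languages K (regular) and L (non-regular context-free) such that there are finite towers of prefixes of arbitrary height between K and L, yet no infinite tower of prefixes between them. Concretely, K = {a,b}* a and L = { a^m (b a*)^n b | m > n ≥ 0 } have, for every k ≥ 1, a tower of prefixes of height 2k (given by a^k(ba)^i and a^k(ba)^i b for i = 0,…,k−1), but no infinite tower of prefixes. -/

import Mathlib

/-- A finite tower of prefixes of height `r` between `K` and `L`. -/
def PrefTower {α : Type*} (K L : Set (List α)) (r : ℕ) (w : ℕ → List α) : Prop :=
  (0 < r → w 0 ∈ K ∪ L) ∧
    ∀ i, i + 1 < r →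
      w i <+: w (i + 1) ∧
        (w i ∈ K → w (i + 1) ∈ L) ∧ (w i ∈ L → w (i + 1) ∈ K)

/-- An infinite tower of prefixes between `K` and `L`. -/
def InfPrefTower {α : Type*} (K L : Set (List α)) (w : ℕ → List α) : Prop :=
  w 0 ∈ K ∪ L ∧
    ∀ i, w i <+: w (i + 1) ∧
      (w i ∈ K → w (i + 1) ∈ L) ∧ (w i ∈ L → w (i + 1) ∈ K)

/-- The letter `a` is `false` and `b` is `true`.  `K = {a,b}* a`. -/
def Kreg : Language Bool := {w | ∃ v, w = v ++ [false]}

/-- `L = { a^m (b a*)^n b | m > n ≥ 0 }`. -/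
def Lcf : Language Bool :=
  {w | ∃ (m n : ℕ) (f : Fin n → ℕ), n < m ∧
    w = List.replicate m false ++
      (List.ofFn fun i => true :: List.replicate (f i) false).flatten ++ [true]}



def Kdfa : DFA Bool Bool := ⟨fun _ x => !x, false, {true}⟩

theorem Kreg_regular : Kreg.IsRegular := by
  refine ⟨Bool, inferInstance, Kdfa, ?_⟩
  ext w
  rcases List.eq_nil_or_concat w with rfl | ⟨v, a, rfl⟩
  · simp only [DFA.mem_accepts, DFA.eval, DFA.evalFrom, Kdfa, Kreg, List.foldl_nil,
      Set.mem_setOf_eq, Set.mem_singleton_iff]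
    constructor
    · intro h; exact absurd h (by simp)
    · rintro ⟨v, hv⟩; exact absurd (congrArg List.length hv) (by simp)
  · simp only [DFA.mem_accepts, DFA.eval, DFA.evalFrom, List.foldl_append, List.foldl_cons,
      List.foldl_nil, Kdfa, Kreg, Set.mem_setOf_eq, Set.mem_singleton_iff]
    constructor
    · intro h
      refine ⟨v, ?_⟩
      simp at h
      simp [h]
    · rintro ⟨u, hu⟩
      have : a = false := by
        have := congrArg List.getLast? hu
        simpa using this
      simp [this]



inductive NTt : Type
  | S | X | A
  deriving DecidableEq

open Symbol in
instance : DecidableEq (ContextFreeRule Bool NTt) := fun r s =>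
  decidable_of_iff (r.input = s.input ∧ r.output = s.output)
    (by rw [ContextFreeRule.ext_iff])

open Symbol NTt in
def Lg : ContextFreeGrammar Bool :=
  ⟨NTt, NTt.S,
    { ⟨S, [terminal false, nonterminal S]⟩,
      ⟨S, [terminal false, nonterminal X, terminal true]⟩,
      ⟨X, []⟩,
      ⟨X, [terminal false, nonterminal X, terminal true, nonterminal A]⟩,
      ⟨A, []⟩,
      ⟨A, [terminal false, nonterminal A]⟩ }⟩

-- interpretation
def LangA : Language Bool := {w | ∃ p, w = List.replicate p false}
def LangX : Language Bool := {w | ∃ (n : ℕ) (f : Fin n → ℕ),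
  w = List.replicate n false ++ (List.ofFn fun i => true :: List.replicate (f i) false).flatten}

open Symbol NTt in
def symLang : Symbol Bool NTt → Language Bool
  | terminal t => {[t]}
  | nonterminal S => Lcf
  | nonterminal X => LangX
  | nonterminal A => LangA

def strLang (l : List (Symbol Bool NTt)) : Language Bool := (l.map symLang).prod

lemma strLang_append (u v : List (Symbol Bool NTt)) :
    strLang (u ++ v) = strLang u * strLang v := by
  simp [strLang, List.prod_append]

lemma strLang_terminals (w : List Bool) :
    strLang (w.map Symbol.terminal) = {w} := by
  induction w with
  | nil => simp [strLang]; rfl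
  | cons x t ih =>
    have : (x :: t).map (Symbol.terminal (N := NTt)) =
        [Symbol.terminal x] ++ t.map Symbol.terminal := rfl
    rw [this, strLang_append, ih]
    have h1 : strLang [Symbol.terminal x] = {[x]} := by
      simp [strLang, symLang]
    rw [h1]
    ext z
    simp only [Language.mem_mul, Set.mem_singleton_iff]
    constructor
    · rintro ⟨a, rfl, b, rfl, rfl⟩; rfl
    · rintro rfl; exact ⟨[x], rfl, t, rfl, rfl⟩

lemma strLang_single (s : Symbol Bool NTt) : strLang [s] = symLang s := by
  simp [strLang]

lemma Lcf_cons {w : List Bool} (h : w ∈ Lcf) : false :: w ∈ Lcf := by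
  obtain ⟨m, n, f, hmn, rfl⟩ := h
  exact ⟨m + 1, n, f, by omega, by simp [List.replicate_succ]⟩

lemma LangX_to_Lcf {w : List Bool} (h : w ∈ LangX) : false :: (w ++ [true]) ∈ Lcf := by
  obtain ⟨n, f, rfl⟩ := h
  exact ⟨n + 1, n, f, by omega, by simp [List.replicate_succ]⟩

lemma LangX_nil : ([] : List Bool) ∈ LangX := ⟨0, Fin.elim0, by simp⟩

lemma LangX_snoc {w : List Bool} (h : w ∈ LangX) (p : ℕ) :
    false :: w ++ true :: List.replicate p false ∈ LangX := by
  obtain ⟨n, f, rfl⟩ := h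
  refine ⟨n + 1, Fin.snoc f p, ?_⟩
  rw [List.ofFn_succ']
  simp [List.replicate_succ, List.flatten_append]

lemma LangA_nil : ([] : List Bool) ∈ LangA := ⟨0, by simp⟩

lemma LangA_cons {w : List Bool} (h : w ∈ LangA) : false :: w ∈ LangA := by
  obtain ⟨p, rfl⟩ := h
  exact ⟨p + 1, by simp [List.replicate_succ]⟩

lemma key_rule {r : ContextFreeRule Bool NTt} (hr : r ∈ Lg.rules) :
    strLang r.output ≤ symLang (Symbol.nonterminal r.input) := by
  have hmem : r ∈ ({⟨NTt.S, [Symbol.terminal false, Symbol.nonterminal NTt.S]⟩,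
      ⟨NTt.S, [Symbol.terminal false, Symbol.nonterminal NTt.X, Symbol.terminal true]⟩,
      ⟨NTt.X, []⟩,
      ⟨NTt.X, [Symbol.terminal false, Symbol.nonterminal NTt.X, Symbol.terminal true,
        Symbol.nonterminal NTt.A]⟩,
      ⟨NTt.A, []⟩,
      ⟨NTt.A, [Symbol.terminal false, Symbol.nonterminal NTt.A]⟩} :
      Finset (ContextFreeRule Bool NTt)) := hr
  simp only [Finset.mem_insert, Finset.mem_singleton] at hmem
  rcases hmem with rfl | rfl | rfl | rfl | rfl | rfl
  · intro x hx
    simp only [strLang, List.map_cons, List.map_nil, List.prod_cons, List.prod_nil, mul_one,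
      symLang] at hx ⊢
    obtain ⟨a, ha, b, hb, rfl⟩ := hx
    replace ha : a = [false] := ha; subst ha
    exact Lcf_cons hb
  · intro x hx
    simp only [strLang, List.map_cons, List.map_nil, List.prod_cons, List.prod_nil, mul_one,
      symLang] at hx ⊢
    obtain ⟨a, ha, b, hb, rfl⟩ := hx
    obtain ⟨c, hc, d, hd, rfl⟩ := hb
    replace ha : a = [false] := ha; replace hd : d = [true] := hd; subst ha; subst hd
    exact (by simpa using LangX_to_Lcf hc : false :: (c ++ [true]) ∈ Lcf)
  · intro x hx
    simp only [strLang, List.map_nil, List.prod_nil, symLang, Language.mem_one] at hx ⊢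
    subst hx; exact LangX_nil
  · intro x hx
    simp only [strLang, List.map_cons, List.map_nil, List.prod_cons, List.prod_nil, mul_one,
      symLang] at hx ⊢
    obtain ⟨a, ha, b, hb, rfl⟩ := hx
    obtain ⟨c, hc, d, hd, rfl⟩ := hb
    obtain ⟨e, he, g, hg, rfl⟩ := hd
    replace ha : a = [false] := ha; replace he : e = [true] := he; subst ha; subst he
    obtain ⟨p, rfl⟩ := hg
    have := LangX_snoc hc p
    exact (by simpa using this : false :: (c ++ true :: List.replicate p false) ∈ LangX)
  · intro x hx
    simp only [strLang, List.map_nil, List.prod_nil, symLang, Language.mem_one] at hx ⊢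
    subst hx; exact LangA_nil
  · intro x hx
    simp only [strLang, List.map_cons, List.map_nil, List.prod_cons, List.prod_nil, mul_one,
      symLang] at hx ⊢
    obtain ⟨a, ha, b, hb, rfl⟩ := hx
    replace ha : a = [false] := ha; subst ha
    exact LangA_cons hb

lemma produces_sound {u v : List (Symbol Bool NTt)} (h : Lg.Produces u v) :
    strLang v ≤ strLang u := by
  obtain ⟨r, hr, hrw⟩ := h
  obtain ⟨p, q, rfl, rfl⟩ := hrw.exists_parts
  erw [strLang_append, strLang_append, strLang_append, strLang_append, strLang_single]
  intro x hx
  obtain ⟨a, ha, b, hb, rfl⟩ := hx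
  obtain ⟨c, hc, d, hd, rfl⟩ := ha
  exact ⟨c ++ d, ⟨c, hc, d, key_rule hr hd, rfl⟩, b, hb, rfl⟩

lemma derives_sound {u v : List (Symbol Bool NTt)} (h : Lg.Derives u v) :
    strLang v ≤ strLang u := by
  induction h with
  | refl => exact le_refl _
  | tail _ hst ih => exact le_trans (produces_sound hst) ih

lemma Lg_lang_sub : Lg.language ≤ Lcf := by
  intro w hw
  have hw := (ContextFreeGrammar.mem_language_iff Lg w).mp hw
  have h1 := derives_sound hw
  erw [strLang_terminals] at h1
  have h2 : w ∈ strLang [Symbol.nonterminal Lg.initial] := h1 rfl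
  rwa [strLang_single] at h2

open Symbol NTt ContextFreeGrammar

abbrev tm (w : List Bool) : List (Symbol Bool Lg.NT) := w.map Symbol.terminal

lemma rule_mem (r : ContextFreeRule Bool NTt)
    (h : r = ⟨S, [terminal false, nonterminal S]⟩ ∨
      r = ⟨S, [terminal false, nonterminal X, terminal true]⟩ ∨
      r = ⟨X, []⟩ ∨
      r = ⟨X, [terminal false, nonterminal X, terminal true, nonterminal A]⟩ ∨
      r = ⟨A, []⟩ ∨ r = ⟨A, [terminal false, nonterminal A]⟩) : r ∈ Lg.rules := by
  show r ∈ ({_, _, _, _, _, _} : Finset _)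
  simp only [Finset.mem_insert, Finset.mem_singleton]
  exact h

lemma derA (p : ℕ) : Lg.Derives [nonterminal A] (tm (List.replicate p false)) := by
  induction p with
  | zero =>
    refine Produces.single ⟨⟨A, []⟩, rule_mem _ (by tauto), ?_⟩
    exact ContextFreeRule.Rewrites.input_output
  | succ p ih =>
    refine Produces.trans_derives ⟨⟨A, [terminal false, nonterminal A]⟩,
      rule_mem _ (by tauto), ContextFreeRule.Rewrites.input_output⟩ ?_
    have := ih.append_left [terminal false]
    simpa [List.replicate_succ] using this

lemma derX (n : ℕ) (f : Fin n → ℕ) : Lg.Derives [nonterminal X]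
    (tm (List.replicate n false ++
      (List.ofFn fun i => true :: List.replicate (f i) false).flatten)) := by
  induction n with
  | zero =>
    refine Produces.single ⟨⟨X, []⟩, rule_mem _ (by tauto), ?_⟩
    simpa using ContextFreeRule.Rewrites.input_output
  | succ n ih =>
    refine Produces.trans_derives ⟨⟨X, [terminal false, nonterminal X, terminal true,
      nonterminal A]⟩, rule_mem _ (by tauto), ContextFreeRule.Rewrites.input_output⟩ ?_
    have h1 : Lg.Derives
        ([terminal false] ++ [(nonterminal X : Symbol Bool Lg.NT)] ++ ([terminal true] ++ [(nonterminal A : Symbol Bool Lg.NT)]))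
        ([terminal false] ++ tm (List.replicate n false ++
          (List.ofFn fun i => true :: List.replicate (f i.castSucc) false).flatten)
          ++ ([terminal true] ++ [(nonterminal A : Symbol Bool Lg.NT)])) :=
      ((ih (fun i => f i.castSucc)).append_left _).append_right _
    have h2 := (derA (f (Fin.last n))).append_left
      ([terminal false] ++ tm (List.replicate n false ++
        (List.ofFn fun i => true :: List.replicate (f i.castSucc) false).flatten)
        ++ [terminal true])
    have h3 := h1.trans (by simpa [List.append_assoc] using h2)
    refine Derives.trans (by simpa using h1) (Derives.trans (by simpa using h2) ?_)
    rw [List.ofFn_succ']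
    simp [List.concat_eq_append, List.flatten_append, Function.comp, List.replicate_succ]
    try exact Derives.refl _

lemma derS (d n : ℕ) (f : Fin n → ℕ) : Lg.Derives [nonterminal S]
    (tm (List.replicate (n + d + 1) false ++
      (List.ofFn fun i => true :: List.replicate (f i) false).flatten ++ [true])) := by
  induction d with
  | zero =>
    refine Produces.trans_derives ⟨⟨S, [terminal false, nonterminal X, terminal true]⟩,
      rule_mem _ (by tauto), ContextFreeRule.Rewrites.input_output⟩ ?_
    have h1 : Lg.Derives ([terminal false] ++ [(nonterminal X : Symbol Bool Lg.NT)] ++ [terminal true])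
        ([terminal false] ++ tm (List.replicate n false ++
          (List.ofFn fun i => true :: List.replicate (f i) false).flatten) ++ [terminal true]) :=
      ((derX n f).append_left _).append_right _
    refine Derives.trans (by simpa using h1) ?_
    simp [List.replicate_succ]
    try exact Derives.refl _
  | succ d ih =>
    refine Produces.trans_derives ⟨⟨S, [terminal false, nonterminal S]⟩,
      rule_mem _ (by tauto), ContextFreeRule.Rewrites.input_output⟩ ?_
    have := ih.append_left [terminal false]
    have he : n + (d + 1) + 1 = (n + d + 1) + 1 := by omega
    rw [he]
    simpa [List.replicate_succ] using this

lemma Lcf_sub_Lg : Lcf ≤ Lg.language := by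
  rintro w ⟨m, n, f, hmn, rfl⟩
  refine (ContextFreeGrammar.mem_language_iff Lg _).mpr ?_
  have := derS (m - n - 1) n f
  have he : n + (m - n - 1) + 1 = m := by omega
  rw [he] at this
  simp at this ⊢; exact this

theorem Lcf_cf : Lcf.IsContextFree :=
  ⟨Lg, le_antisymm Lg_lang_sub Lcf_sub_Lg⟩


lemma Lcf_count_true {w : List Bool} (h : w ∈ Lcf) :
    w.count true = w.count false - (w.count false - w.count true) ∧
      w.count true < w.count false + 1 := by
  obtain ⟨m, n, f, hmn, rfl⟩ := h
  have ht : (List.replicate m false ++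
      (List.ofFn fun i => true :: List.replicate (f i) false).flatten ++ [true]).count true
      = n + 1 := by
    simp [List.count_append, List.count_flatten, List.count_replicate, List.sum_ofFn]
  have hf : m ≤ (List.replicate m false ++
      (List.ofFn fun i => true :: List.replicate (f i) false).flatten ++ [true]).count false := by
    simp [List.count_append, List.count_replicate]
  constructor
  · omega
  · omega

lemma Lcf_count {w : List Bool} (h : w ∈ Lcf) : w.count true ≤ w.count false :=
  by have := Lcf_count_true h; omega

theorem Lcf_not_reg : ¬ Lcf.IsRegular := by
  rintro ⟨σ, fσ, M, hM⟩
  have hne : Nonempty σ := ⟨M.start⟩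
  set t := Fintype.card σ with htdef
  have ht : 1 ≤ t := Fintype.card_pos
  set x := List.replicate t false ++ List.replicate t true with hxdef
  have hx : x ∈ Lcf := by
    refine ⟨t, t - 1, fun _ => 0, by omega, ?_⟩
    have h1 : (List.ofFn fun _ : Fin (t-1) => true :: List.replicate 0 false).flatten
        = List.replicate (t-1) true := by
      simp [List.ofFn_const, List.flatten_replicate_singleton]
    have h3 : List.replicate (t-1) true ++ [true] = List.replicate t true := by
      rw [← List.replicate_succ']; congr 1; omega
    rw [h1, hxdef, List.append_assoc, h3]
  have hxa : x ∈ M.accepts := by rw [hM]; exact hx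
  obtain ⟨a, b, c, hxe, hlen, hb, hsub⟩ := M.pumping_lemma hxa
    (by simp only [hxdef, List.length_append, List.length_replicate]; omega)
  have hac : a ++ c ∈ M.accepts := by
    have h0 : a ++ [] ++ c ∈ {a} * KStar.kstar {b} * {c} :=
      Language.mem_mul.mpr ⟨a ++ [], Language.mem_mul.mpr
        ⟨a, rfl, [], Language.nil_mem_kstar _, rfl⟩, c, rfl, rfl⟩
    have h1 : a ++ [] ++ c ∈ M.accepts := hsub h0
    simpa using h1
  have hacL : a ++ c ∈ Lcf := by rwa [hM] at hac
  -- b consists of falses only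
  have hab : a ++ b = List.replicate (a.length + b.length) false := by
    have h1 : a ++ b = x.take (a.length + b.length) := by
      rw [hxe, List.take_append_of_le_length (by simp)]
      simp
    rw [h1, hxdef, List.take_append_of_le_length (by simpa using hlen)]
    rw [List.take_replicate]
    congr 1
    omega
  have hbmem : ∀ y ∈ b, y = false := by
    intro y hy
    have : y ∈ a ++ b := List.mem_append_right _ hy
    rw [hab] at this
    exact List.eq_of_mem_replicate this
  have hbt : b.count true = 0 := by
    rw [List.count_eq_zero]
    intro h; exact absurd (hbmem _ h) (by simp)
  have hbf : b.count false = b.length := by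
    rw [List.count_eq_length]; intro y hy; simp [hbmem y hy]
  have hblen : 1 ≤ b.length := List.length_pos_iff.mpr hb
  -- counts of x
  have hxt : x.count true = t := by simp [hxdef, List.count_append, List.count_replicate]
  have hxf : x.count false = t := by simp [hxdef, List.count_append, List.count_replicate]
  have hxe' : x.count true = a.count true + b.count true + c.count true := by
    rw [hxe]; simp [List.count_append, Nat.add_assoc]
  have hxf' : x.count false = a.count false + b.count false + c.count false := by
    rw [hxe]; simp [List.count_append, Nat.add_assoc]
  have hct : (a ++ c).count true = a.count true + c.count true := by simp [List.count_append]
  have hcf : (a ++ c).count false = a.count false + c.count false := by simp [List.count_append]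
  have := Lcf_count hacL
  omega


lemma Kreg_last {w : List Bool} (h : w ∈ Kreg) : w.getLast? = some false := by
  obtain ⟨v, rfl⟩ := h; simp
lemma Lcf_last {w : List Bool} (h : w ∈ Lcf) : w.getLast? = some true := by
  obtain ⟨m, n, f, hmn, rfl⟩ := h; simp
lemma KL_disj {w : List Bool} (hK : w ∈ Kreg) (hL : w ∈ Lcf) : False := by
  have := Kreg_last hK; have := Lcf_last hL; simp_all

lemma tower_evenK (k q : ℕ) (hk : 1 ≤ k) :
    List.replicate k false ++ (List.replicate q [true, false]).flatten ++ [] ∈ Kreg := by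
  rw [List.append_nil]
  cases q with
  | zero =>
    refine ⟨List.replicate (k-1) false, ?_⟩
    have : k = (k - 1) + 1 := by omega
    rw [this, List.replicate_succ']
    simp
  | succ q =>
    refine ⟨List.replicate k false ++ (List.replicate q [true, false]).flatten ++ [true], ?_⟩
    rw [List.replicate_succ', List.flatten_append]
    simp
lemma tower_oddL (k q : ℕ) (hq : q < k) :
    List.replicate k false ++ (List.replicate q [true, false]).flatten ++ [true] ∈ Lcf := by
  refine ⟨k, q, fun _ => 1, hq, ?_⟩
  congr 2
  rw [List.ofFn_const]
  rfl

lemma rep_eq : ∀ (m m' : ℕ) (ru rv : List Bool),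
    List.replicate m false ++ true :: ru = List.replicate m' false ++ true :: rv → m = m' := by
  intro m
  induction m with
  | zero =>
    intro m' ru rv h
    cases m' with
    | zero => rfl
    | succ m' => simp [List.replicate_succ] at h
  | succ m ih =>
    intro m' ru rv h
    cases m' with
    | zero => simp [List.replicate_succ] at h
    | succ m' =>
      simp only [List.replicate_succ, List.cons_append, List.cons.injEq] at h
      exact congrArg (· + 1) (ih m' ru rv h.2)

lemma Lcf_count_le {m n : ℕ} {f : Fin n → ℕ} :
    (List.replicate m false ++
      (List.ofFn fun i => true :: List.replicate (f i) false).flatten ++ [true]).count true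
      = n + 1 := by
  simp [List.count_append, List.count_flatten, List.count_replicate, List.sum_ofFn]

lemma Lcf_shape {w : List Bool} (h : w ∈ Lcf) :
    ∃ m r, w = List.replicate m false ++ true :: r ∧ w.count true ≤ m := by
  obtain ⟨m, n, f, hmn, rfl⟩ := h
  have hc := Lcf_count_le (m := m) (n := n) (f := f)
  refine ⟨m, ?_⟩
  cases n with
  | zero =>
    refine ⟨[], ?_, ?_⟩
    · simp
    · omega
  | succ n =>
    refine ⟨List.replicate (f 0) false ++
      (List.ofFn fun i : Fin n => true :: List.replicate (f i.succ) false).flatten ++ [true],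
      ?_, ?_⟩
    · rw [List.ofFn_succ]
      simp
    · omega



theorem no_inf_tower : ¬ ∃ w : ℕ → List Bool,
    InfPrefTower (Kreg : Set (List Bool)) (Lcf : Set (List Bool)) w := by
  rintro ⟨w, h0, hs⟩
  have hLs : ∃ s, w s ∈ Lcf := by
    rcases h0 with hK | hL
    · exact ⟨1, (hs 0).2.1 hK⟩
    · exact ⟨0, hL⟩
  obtain ⟨s, hLs⟩ := hLs
  have alt : ∀ i, w (s + 2*i) ∈ Lcf := by
    intro i
    induction i with
    | zero => simpa using hLs
    | succ i ih =>
      have hK : w (s + 2*i + 1) ∈ Kreg := (hs (s + 2*i)).2.2 ih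
      have hL : w (s + 2*i + 1 + 1) ∈ Lcf := (hs (s + 2*i + 1)).2.1 hK
      have he : s + 2*(i+1) = s + 2*i + 1 + 1 := by omega
      rwa [he]
  have strict : ∀ i, ∃ t, t ≠ [] ∧ w (s + 2*(i+1)) = w (s + 2*i) ++ t := by
    intro i
    obtain ⟨t1, ht1⟩ := (hs (s + 2*i)).1
    obtain ⟨t2, ht2⟩ := (hs (s + 2*i + 1)).1
    refine ⟨t1 ++ t2, ?_, ?_⟩
    · intro hnil
      rw [List.append_eq_nil_iff] at hnil
      obtain ⟨rfl, -⟩ := hnil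
      rw [List.append_nil] at ht1
      have hK : w (s + 2*i + 1) ∈ Kreg := (hs (s + 2*i)).2.2 (alt i)
      rw [← ht1] at hK
      exact KL_disj hK (alt i)
    · have he : s + 2*(i+1) = s + 2*i + 1 + 1 := by omega
      rw [he, ← ht2, ← ht1, List.append_assoc]
  obtain ⟨m0, r0, h0eq, h0c⟩ := Lcf_shape (alt 0)
  have hm : ∀ i, ∃ r, w (s + 2*i) = List.replicate m0 false ++ true :: r := by
    intro i
    induction i with
    | zero => exact ⟨r0, by simpa using h0eq⟩
    | succ i ih =>
      obtain ⟨r, hr⟩ := ih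
      obtain ⟨t, htne, hte⟩ := strict i
      obtain ⟨m', r', heq', -⟩ := Lcf_shape (alt (i+1))
      have hkey : List.replicate m0 false ++ true :: (r ++ t)
          = List.replicate m' false ++ true :: r' := by
        rw [← heq', hte, hr]
        simp
      have := rep_eq m0 m' _ _ hkey
      exact ⟨r', by rw [heq', ← this]⟩
  have hbd : ∀ i, (w (s + 2*i)).count true ≤ m0 := by
    intro i
    obtain ⟨m', r', heq', hc'⟩ := Lcf_shape (alt i)
    obtain ⟨r, hr⟩ := hm i
    have : m' = m0 := rep_eq m' m0 r' r (by rw [← heq', ← hr])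
    omega
  have grow : ∀ i, (w (s + 2*i)).count true + 1 ≤ (w (s + 2*(i+1))).count true := by
    intro i
    obtain ⟨t, htne, hte⟩ := strict i
    have hlast : (w (s + 2*i) ++ t).getLast? = some true := by
      rw [← hte]; exact Lcf_last (alt (i+1))
    rw [List.getLast?_append_of_ne_nil _ htne] at hlast
    have hmem : true ∈ t := List.mem_of_mem_getLast? (by simp [hlast])
    have hpos : 0 < t.count true := List.count_pos_iff.mpr hmem
    rw [hte, List.count_append]
    omega
  have mono : ∀ i, i ≤ (w (s + 2*i)).count true := by
    intro i
    induction i with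
    | zero => omega
    | succ i ih => have := grow i; omega
  have h1 := mono (m0 + 1)
  have h2 := hbd (m0 + 1)
  omega



theorem towers (k : ℕ) (hk : 1 ≤ k) :
    PrefTower (Kreg : Set (List Bool)) (Lcf : Set (List Bool)) (2 * k)
      (fun j => List.replicate k false ++
        (List.replicate (j / 2) [true, false]).flatten ++
        if j % 2 = 1 then [true] else []) := by
  constructor
  · intro _
    left
    have := tower_evenK k 0 hk
    simp at this ⊢; exact this
  · intro i hi
    have h2 : i % 2 = 0 ∨ i % 2 = 1 := by omega
    rcases h2 with h2 | h2
    · -- i even: w i ∈ K, w (i+1) = w i ++ [true] ∈ L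
      have hd : (i+1)/2 = i/2 := by omega
      have hm : (i+1) % 2 = 1 := by omega
      have hne : ¬ (i % 2 = 1) := by omega
      simp only [hd, hm, if_pos rfl, if_neg hne]
      have hK : List.replicate k false ++ (List.replicate (i/2) [true, false]).flatten ++ []
          ∈ Kreg := tower_evenK k (i/2) hk
      have hL : List.replicate k false ++ (List.replicate (i/2) [true, false]).flatten ++ [true]
          ∈ Lcf := tower_oddL k (i/2) (by omega)
      refine ⟨⟨[true], by simp⟩, fun _ => hL, fun h => absurd h (fun h => KL_disj hK h)⟩
    · -- i odd
      have hd : (i+1)/2 = i/2 + 1 := by omega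
      have hm : ¬ ((i+1) % 2 = 1) := by omega
      simp only [hd]
      rw [if_pos h2, if_neg hm]
      have hK : List.replicate k false ++ (List.replicate (i/2+1) [true, false]).flatten ++ []
          ∈ Kreg := tower_evenK k (i/2+1) hk
      have hL : List.replicate k false ++ (List.replicate (i/2) [true, false]).flatten ++ [true]
          ∈ Lcf := tower_oddL k (i/2) (by omega)
      have hstep : List.replicate k false ++ (List.replicate (i/2+1) [true, false]).flatten ++ []
          = (List.replicate k false ++ (List.replicate (i/2) [true, false]).flatten ++ [true])
            ++ [false] := by
        rw [List.replicate_succ', List.flatten_append]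
        simp
      refine ⟨⟨[false], hstep.symm⟩, ?_, fun _ => hK⟩
      intro h
      exact absurd h (fun h' => KL_disj h' hL)

theorem pref_towers_arbitrary_no_infinite :
    Kreg.IsRegular ∧ Lcf.IsContextFree ∧ ¬ Lcf.IsRegular ∧
    (∀ k : ℕ, 1 ≤ k →
      PrefTower (Kreg : Set (List Bool)) (Lcf : Set (List Bool)) (2 * k)
        (fun j => List.replicate k false ++
          (List.replicate (j / 2) [true, false]).flatten ++
          if j % 2 = 1 then [true] else [])) ∧
    ¬ ∃ w : ℕ → List Bool,
      InfPrefTower (Kreg : Set (List Bool)) (Lcf : Set (List Bool)) w := by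
  exact ⟨Kreg_regular, Lcf_cf, Lcf_not_reg, towers, no_inf_tower⟩
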